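/- A table r satisfies the functional dependency X → Y (for finite sets of attributes X and Y) if and only if for every list X' whose entries are pairwise distinct and whose set of entries equals X, and every list Y' whose set of entries equals Y, r satisfies the order dependency X' ↦→ X' ++ Y'. -/

import Mathlib

/-- `ordLE X t s` : the lexicographic weak order `t ≼_X s` induced by a list
of attributes `X` (each attribute is a function `τ → ℤ`). -/
def ordLE {τ : Type*} : List (τ → ℤ) → τ → τ → Prop
  | [], _, _ => True
  | A :: T, t, s => A t < A s ∨ (A t = A s ∧ ordLE T t s)

/-- The table `r` satisfies the order dependency (OD) `X ↦→ Y`. -/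
def satOD {τ : Type*} (r : List τ) (X Y : List (τ → ℤ)) : Prop :=
  ∀ t ∈ r, ∀ s ∈ r, ordLE X t s → ordLE Y t s

/-- `X` and `Y` are order equivalent over `r` (`X ↔ Y`). -/
def orderEquiv {τ : Type*} (r : List τ) (X Y : List (τ → ℤ)) : Prop :=
  satOD r X Y ∧ satOD r Y X

/-- `X` and `Y` are order compatible over `r` (the OCD `X ~ Y`). -/
def satOCD {τ : Type*} (r : List τ) (X Y : List (τ → ℤ)) : Prop :=
  orderEquiv r (X ++ Y) (Y ++ X)

/-- The table `r` satisfies the functional dependency (FD) `X → Y`. -/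
def satFD {τ : Type*} (r : List τ) (X Y : Finset (τ → ℤ)) : Prop :=
  ∀ t ∈ r, ∀ s ∈ r, (∀ A ∈ X, A t = A s) → ∀ B ∈ Y, B t = B s

/-- Attribute `A` is a constant in the context `Z` over `r`
(the set-based canonical OD `Z : [] ↦→ A`). -/
def constIn {τ : Type*} [DecidableEq (τ → ℤ)] (r : List τ) (Z : Finset (τ → ℤ))
    (A : τ → ℤ) : Prop :=
  ∀ Zp : List (τ → ℤ), Zp.Nodup → Zp.toFinset = Z → satOD r Zp (Zp ++ [A])

/-- Attributes `A` and `B` are order compatible in the context `Z` over `r`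
(the set-based canonical OCD `Z : A ~ B`). -/
def ocIn {τ : Type*} [DecidableEq (τ → ℤ)] (r : List τ) (Z : Finset (τ → ℤ))
    (A B : τ → ℤ) : Prop :=
  ∀ Zp : List (τ → ℤ), Zp.Nodup → Zp.toFinset = Z → satOCD r (Zp ++ [A]) (Zp ++ [B])


lemma ordLE_of_eqOn {τ : Type*} {X : List (τ → ℤ)} {t s : τ}
    (h : ∀ A ∈ X, A t = A s) : ordLE X t s := by
  induction X with
  | nil => trivial
  | cons A T ih =>
    exact Or.inr ⟨h A (List.mem_cons_self),
      ih fun B hB => h B (List.mem_cons_of_mem _ hB)⟩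

lemma ordLE_cases {τ : Type*} {X : List (τ → ℤ)} {t s : τ} (Y : List (τ → ℤ))
    (h : ordLE X t s) : (∀ A ∈ X, A t = A s) ∨ ordLE (X ++ Y) t s := by
  induction X with
  | nil => exact Or.inl (by simp)
  | cons A T ih =>
    rcases h with h | ⟨he, hT⟩
    · exact Or.inr (Or.inl h)
    · rcases ih hT with h1 | h2
      · refine Or.inl ?_
        intro B hB
        rcases List.mem_cons.mp hB with rfl | hB
        · exact he
        · exact h1 B hB
      · exact Or.inr (Or.inr ⟨he, h2⟩)

lemma ordLE_append_right {τ : Type*} {X Y : List (τ → ℤ)} {t s : τ}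
    (heq : ∀ A ∈ X, A t = A s) (h : ordLE (X ++ Y) t s) : ordLE Y t s := by
  induction X with
  | nil => exact h
  | cons A T ih =>
    rcases h with h | ⟨_, hT⟩
    · exact absurd (heq A (List.mem_cons_self)) (ne_of_lt h)
    · exact ih (fun B hB => heq B (List.mem_cons_of_mem _ hB)) hT

lemma ordLE_antisymm {τ : Type*} {Y : List (τ → ℤ)} {t s : τ}
    (h1 : ordLE Y t s) (h2 : ordLE Y s t) : ∀ B ∈ Y, B t = B s := by
  induction Y with
  | nil => simp
  | cons A T ih =>
    have he : A t = A s := by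
      rcases h1 with h1 | ⟨h1, _⟩
      · rcases h2 with h2 | ⟨h2, _⟩
        · exact absurd h1 (not_lt_of_gt h2)
        · exact absurd h1 (not_lt_of_ge (le_of_eq h2))
      · exact h1
    intro B hB
    rcases List.mem_cons.mp hB with rfl | hB
    · exact he
    · have hT1 : ordLE T t s := by
        rcases h1 with h1 | ⟨_, h1⟩
        · exact absurd he (ne_of_lt h1)
        · exact h1
      have hT2 : ordLE T s t := by
        rcases h2 with h2 | ⟨_, h2⟩
        · exact absurd he.symm (ne_of_lt h2)
        · exact h2
      exact ih hT1 hT2 B hB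

theorem stmt_1 {τ : Type*} [DecidableEq (τ → ℤ)] (r : List τ) (X Y : Finset (τ → ℤ)) :
    satFD r X Y ↔
      ∀ X' : List (τ → ℤ), X'.Nodup → X'.toFinset = X →
        ∀ Y' : List (τ → ℤ), Y'.toFinset = Y → satOD r X' (X' ++ Y') := by
  constructor
  · intro hFD X' hnd hX Y' hY t ht s hs h
    rcases ordLE_cases Y' h with heq | h2
    · refine ordLE_of_eqOn fun A hA => ?_
      rcases List.mem_append.mp hA with hA | hA
      · exact heq A hA
      · exact hFD t ht s hs (fun B hB => heq B (by rw [← hX] at hB; exact List.mem_toFinset.mp hB))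
          A (hY ▸ List.mem_toFinset.mpr hA)
    · exact h2
  · intro h t ht s hs heq B hB
    have hX' := h X.toList X.nodup_toList (Finset.toList_toFinset X)
      Y.toList (Finset.toList_toFinset Y)
    have heqX : ∀ A ∈ X.toList, A t = A s := fun A hA =>
      heq A (Finset.mem_toList.mp hA)
    have h1 : ordLE Y.toList t s :=
      ordLE_append_right heqX (hX' t ht s hs (ordLE_of_eqOn heqX))
    have heqX' : ∀ A ∈ X.toList, A s = A t := fun A hA => (heqX A hA).symm
    have h2 : ordLE Y.toList s t :=
      ordLE_append_right heqX' (hX' s hs t ht (ordLE_of_eqOn heqX'))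
    exact ordLE_antisymm h1 h2 B (Finset.mem_toList.mpr hB)
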